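/- For positive reals v_1 ≥ v_2 ≥ ... ≥ v_k > 0 with v_1 ≤ v_2 + ... + v_k, and for any natural number d ≥ 2, one has (v_1)^(1/d) + ... + (v_k)^(1/d) ≥ (2(v_1 + ... + v_k))^(1/d). -/

import Mathlib

theorem weight_inequality_roots (k d : ℕ) (hk : 2 ≤ k) (hd : 2 ≤ d)
    (v : Fin k → ℝ) (hpos : ∀ i, 0 < v i)
    (hmono : ∀ i j : Fin k, i ≤ j → v j ≤ v i)
    (hdom : v ⟨0, by omega⟩ ≤ ∑ i ∈ Finset.univ.erase ⟨0, by omega⟩, v i) :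
    (2 * ∑ i, v i) ^ ((1 : ℝ) / d) ≤ ∑ i, (v i) ^ ((1 : ℝ) / d) := by
  have hk0 : 0 < k := by omega
  set z : Fin k := ⟨0, by omega⟩
  set p : ℝ := (1 : ℝ) / d with hp
  have hdpos : (0:ℝ) < d := by exact_mod_cast (by omega : 0 < d)
  have hppos : 0 < p := by positivity
  have hphalf : p ≤ 1/2 := by
    rw [hp]
    apply div_le_div_of_nonneg_left one_pos.le two_pos
    exact_mod_cast hd
  set T : ℝ := ∑ i, v i with hT
  have hTpos : 0 < T := Finset.sum_pos (fun i _ => hpos i) ⟨z, Finset.mem_univ z⟩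
  have hsplit : v z + ∑ i ∈ Finset.univ.erase z, v i = T :=
    Finset.add_sum_erase _ _ (Finset.mem_univ z)
  have hv0 : v z ≤ T / 2 := by linarith
  have hvi : ∀ i, v i ≤ T / 2 := fun i =>
    le_trans (hmono z i (by simp [Fin.le_def, z])) hv0
  have hT2 : 0 < T / 2 := by linarith
  -- per-term bound
  have key : ∀ i : Fin k, v i * (T/2) ^ (p - 1) ≤ v i ^ p := by
    intro i
    have h1 : (T/2) ^ (p-1) ≤ (v i) ^ (p-1) :=
      Real.rpow_le_rpow_of_nonpos (hpos i) (hvi i) (by linarith)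
    calc v i * (T/2) ^ (p-1) ≤ v i * (v i) ^ (p-1) := by
          exact mul_le_mul_of_nonneg_left h1 (hpos i).le
      _ = v i ^ p := by
          nth_rewrite 1 [← Real.rpow_one (v i)]
          rw [← Real.rpow_add (hpos i)]
          ring_nf
  have hsum : T * (T/2) ^ (p-1) ≤ ∑ i, v i ^ p := by
    calc T * (T/2) ^ (p-1) = ∑ i, v i * (T/2) ^ (p-1) := by
          rw [← Finset.sum_mul]
      _ ≤ ∑ i, v i ^ p := Finset.sum_le_sum (fun i _ => key i)
  refine le_trans ?_ hsum
  -- (2T)^p ≤ T * (T/2)^(p-1) = 2 * (T/2)^p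
  have h2 : T * (T/2) ^ (p-1) = 2 * (T/2) ^ p := by
    rw [show p = 1 + (p-1) by ring, Real.rpow_add hT2, Real.rpow_one]
    ring
  rw [h2]
  have h4 : (2 * T) ^ p = (4:ℝ) ^ p * (T/2) ^ p := by
    rw [← Real.mul_rpow (by norm_num) hT2.le]
    ring_nf
  rw [h4]
  have h5 : (4:ℝ) ^ p ≤ 2 := by
    have h6 : (4:ℝ) ^ p = (2:ℝ) ^ (2 * p) := by
      rw [show (4:ℝ) = 2 * 2 by norm_num, Real.mul_rpow (by norm_num) (by norm_num),
        ← Real.rpow_add (by norm_num : (0:ℝ) < 2)]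
      ring_nf
    calc (4:ℝ) ^ p = (2:ℝ) ^ (2*p) := h6
      _ ≤ (2:ℝ) ^ (1:ℝ) := (Real.rpow_le_rpow_left_iff one_lt_two).mpr (by linarith)
      _ = 2 := Real.rpow_one 2
  have hpow : 0 < (T/2) ^ p := Real.rpow_pos_of_pos hT2 p
  nlinarith [hpow, h5]
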